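/- arXiv:1205.6837 — 5 statements merged into one kernel-verified Lean document; each statement's English description precedes it below -/
import Mathlib

section
/- Let n ≥ 3 and let R = ℤ[q,q⁻¹]. Let 𝓗ₙ be the Iwahori–Hecke algebra of Sₙ, namely the unital associative R-algebra with generators T₁,…,T_{n−1} subject to the relations T_iT_j = T_jT_i for |i−j| ≥ 2, T_iT_{i+1}T_i = T_{i+1}T_iT_{i+1} for 1 ≤ i ≤ n−2, and T_i² = q + (q−1)T_i for 1 ≤ i ≤ n−1 (realized, e.g., as a RingQuot of the free R-algebra on n−1 generators by these relations). Then there does not exist a multiplicative R-basis of the centre Z(𝓗ₙ). -/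
open LaurentPolynomial

/-- The defining relations of the Iwahori–Hecke algebra of `Sₙ` over
`R = ℤ[q,q⁻¹]`, on the free `R`-algebra with generators `T₁, …, T_{n-1}`:
the commuting relations `TᵢTⱼ = TⱼTᵢ` for `|i - j| ≥ 2`, the braid relations
`TᵢTᵢ₊₁Tᵢ = Tᵢ₊₁TᵢTᵢ₊₁`, and the quadratic relations `Tᵢ² = q + (q-1)Tᵢ`. -/
inductive HeckeRel (n : ℕ) :
    FreeAlgebra (LaurentPolynomial ℤ) (Fin (n - 1)) →
      FreeAlgebra (LaurentPolynomial ℤ) (Fin (n - 1)) → Prop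
  | comm (i j : Fin (n - 1)) (h : (i : ℕ) + 2 ≤ (j : ℕ) ∨ (j : ℕ) + 2 ≤ (i : ℕ)) :
      HeckeRel n
        (FreeAlgebra.ι (LaurentPolynomial ℤ) i * FreeAlgebra.ι (LaurentPolynomial ℤ) j)
        (FreeAlgebra.ι (LaurentPolynomial ℤ) j * FreeAlgebra.ι (LaurentPolynomial ℤ) i)
  | braid (i j : Fin (n - 1)) (h : (i : ℕ) + 1 = (j : ℕ)) :
      HeckeRel n
        (FreeAlgebra.ι (LaurentPolynomial ℤ) i * FreeAlgebra.ι (LaurentPolynomial ℤ) j *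
          FreeAlgebra.ι (LaurentPolynomial ℤ) i)
        (FreeAlgebra.ι (LaurentPolynomial ℤ) j * FreeAlgebra.ι (LaurentPolynomial ℤ) i *
          FreeAlgebra.ι (LaurentPolynomial ℤ) j)
  | quad (i : Fin (n - 1)) :
      HeckeRel n
        (FreeAlgebra.ι (LaurentPolynomial ℤ) i * FreeAlgebra.ι (LaurentPolynomial ℤ) i)
        (algebraMap (LaurentPolynomial ℤ) _ (T 1) +
          algebraMap (LaurentPolynomial ℤ) _ (T 1 - 1) * FreeAlgebra.ι (LaurentPolynomial ℤ) i)

/-- The Iwahori–Hecke algebra `𝓗ₙ` of the symmetric group `Sₙ` over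
`R = ℤ[q,q⁻¹]`, as the quotient of the free `R`-algebra on `T₁, …, T_{n-1}` by
the braid and quadratic relations. -/
noncomputable abbrev HeckeAlgebra (n : ℕ) : Type := RingQuot (HeckeRel n)

noncomputable section
namespace HeckeAux

abbrev Rq : Type := LaurentPolynomial ℤ

variable (n : ℕ)

def mkH : FreeAlgebra Rq (Fin (n-1)) →ₐ[Rq] HeckeAlgebra n := RingQuot.mkAlgHom Rq (HeckeRel n)

/-- generators, defined for all naturals (`1` out of range) -/
def tt (i : ℕ) : HeckeAlgebra n := if h : i < n-1 then mkH n (FreeAlgebra.ι Rq ⟨i, h⟩) else 1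

lemma t_comm {i j : ℕ} (hij : i + 2 ≤ j) : tt n i * tt n j = tt n j * tt n i := by
  by_cases hj : j < n - 1
  · have hi : i < n - 1 := by omega
    rw [tt, tt, dif_pos hi, dif_pos hj, ← map_mul, ← map_mul]
    exact RingQuot.mkAlgHom_rel Rq (HeckeRel.comm ⟨i, hi⟩ ⟨j, hj⟩ (Or.inl hij))
  · simp only [tt]
    rw [dif_neg hj, mul_one, one_mul]

lemma t_braid {i : ℕ} (h : i + 1 < n - 1) :
    tt n i * tt n (i+1) * tt n i = tt n (i+1) * tt n i * tt n (i+1) := by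
  have hi : i < n - 1 := by omega
  rw [tt, tt, dif_pos hi, dif_pos h, ← map_mul, ← map_mul, ← map_mul, ← map_mul]
  exact RingQuot.mkAlgHom_rel Rq (HeckeRel.braid ⟨i, hi⟩ ⟨i+1, h⟩ rfl)

lemma t_quad {i : ℕ} (h : i < n - 1) :
    tt n i * tt n i = algebraMap Rq _ (T 1) + algebraMap Rq _ (T 1 - 1) * tt n i := by
  rw [tt, dif_pos h, ← map_mul]
  have := RingQuot.mkAlgHom_rel Rq (HeckeRel.quad ⟨i, h⟩)
  rw [show (RingQuot.mkAlgHom Rq (HeckeRel n)) = mkH n from rfl] at this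
  rw [this, map_add, map_mul]
  simp [AlgHom.commutes]

/-- the one dimensional characters -/
def ch (c : Rq) (hc : c * c = T 1 + (T 1 - 1) * c) : HeckeAlgebra n →ₐ[Rq] Rq :=
  RingQuot.liftAlgHom Rq ⟨FreeAlgebra.lift Rq (fun _ => c), by
    intro x y h
    induction h with
    | comm i j hij => simp [mul_comm]
    | braid i j hij => simp
    | quad i => simp [hc, Algebra.algebraMap_self]⟩

lemma ch_t (c : Rq) (hc : c * c = T 1 + (T 1 - 1) * c) {i : ℕ} (h : i < n - 1) :
    ch n c hc (tt n i) = c := by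
  rw [tt, dif_pos h, ch, mkH, RingQuot.liftAlgHom_mkAlgHom_apply]
  simp

end HeckeAux

namespace HeckeAux

variable {n : ℕ}

variable (n) in
/-- `D_{m+1} = 1 + a T_m D_m` (0-based generators) -/
def DD (a : Rq) : ℕ → HeckeAlgebra n
  | 0 => 1
  | 1 => 1
  | (m+2) => 1 + algebraMap Rq _ a * (tt n m * DD a (m+1))

variable (n) in
def DT (a : Rq) : ℕ → HeckeAlgebra n
  | 0 => 1
  | 1 => 1
  | (m+2) => 1 + algebraMap Rq _ a * (DT a (m+1) * tt n m)

variable (n) in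
def EE (a : Rq) : ℕ → HeckeAlgebra n
  | 0 => 1
  | (m+1) => EE a m * DD n a (m+1)

lemma comm_aM (x : HeckeAlgebra n) (a : Rq) : Commute x (algebraMap Rq _ a) :=
  (Algebra.commutes a x).symm

lemma comm_tt {i j : ℕ} (hij : i + 2 ≤ j) : Commute (tt n j) (tt n i) :=
  (t_comm n hij).symm

lemma t_DD_comm (a : Rq) : ∀ {m j : ℕ}, m ≤ j → Commute (tt n j) (DD n a m)
  | 0, j, _ => Commute.one_right _
  | 1, j, _ => Commute.one_right _
  | (m+2), j, h => by
      rw [DD]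
      exact (Commute.one_right _).add_right
        ((comm_aM _ a).mul_right ((comm_tt (by omega)).mul_right (t_DD_comm a (by omega))))

lemma t_DT_comm (a : Rq) : ∀ {m j : ℕ}, m ≤ j → Commute (tt n j) (DT n a m)
  | 0, j, _ => Commute.one_right _
  | 1, j, _ => Commute.one_right _
  | (m+2), j, h => by
      rw [DT]
      exact (Commute.one_right _).add_right
        ((comm_aM _ a).mul_right ((t_DT_comm a (by omega)).mul_right (comm_tt (by omega))))

lemma t_EE_comm (a : Rq) : ∀ {m j : ℕ}, m ≤ j → Commute (tt n j) (EE n a m)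
  | 0, j, _ => Commute.one_right _
  | (m+1), j, h => by
      rw [EE]
      exact (t_EE_comm a (by omega)).mul_right (t_DD_comm a h)

/-- Claim A : `E_m D_{m+1} = D̃_{m+1} E_m` -/
lemma AA (a : Rq) : ∀ (m : ℕ), EE n a m * DD n a (m+1) = DT n a (m+1) * EE n a m
  | 0 => by
      show EE n a 0 * DD n a 1 = DT n a 1 * EE n a 0
      rw [EE, DD, DT, one_mul]
  | 1 => by
      show EE n a 1 * DD n a 2 = DT n a 2 * EE n a 1
      have h1 : EE n a 1 = 1 := by
        show EE n a 0 * DD n a 1 = 1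
        rw [EE, DD, one_mul]
      rw [h1, one_mul, mul_one]
      show DD n a 2 = DT n a 2
      rw [DD, DT, DD, DT, mul_one, one_mul]
  | (m+2) => by
      have key : EE n a (m+2) = DT n a (m+2) * EE n a (m+1) := by
        show EE n a (m+1) * DD n a (m+2) = _
        rw [AA a (m+1)]
      have hE2 : EE n a (m+2) = EE n a (m+1) * DD n a (m+2) := rfl
      have ct : tt n (m+1) * EE n a (m+1) = EE n a (m+1) * tt n (m+1) :=
        t_EE_comm a (le_refl (m+1))
      have step : EE n a (m+2) * (tt n (m+1) * DD n a (m+2))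
          = (DT n a (m+2) * tt n (m+1)) * EE n a (m+2) := by
        calc EE n a (m+2) * (tt n (m+1) * DD n a (m+2))
            = DT n a (m+2) * (EE n a (m+1) * tt n (m+1)) * DD n a (m+2) := by
              rw [key]; simp only [mul_assoc]
          _ = DT n a (m+2) * (tt n (m+1) * EE n a (m+1)) * DD n a (m+2) := by rw [ct]
          _ = (DT n a (m+2) * tt n (m+1)) * (EE n a (m+1) * DD n a (m+2)) := by
              simp only [mul_assoc]
          _ = (DT n a (m+2) * tt n (m+1)) * EE n a (m+2) := by rw [← hE2]
      show EE n a (m+2) * DD n a (m+3) = DT n a (m+3) * EE n a (m+2)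
      have hD : DD n a (m+3) = 1 + algebraMap Rq _ a * (tt n (m+1) * DD n a (m+2)) := rfl
      have hT : DT n a (m+3) = 1 + algebraMap Rq _ a * (DT n a (m+2) * tt n (m+1)) := rfl
      rw [hD, hT, mul_add, add_mul, mul_one, one_mul]
      congr 1
      rw [← mul_assoc, (comm_aM (EE n a (m+2)) a).eq, mul_assoc, step]
      simp only [mul_assoc]

end HeckeAux

namespace HeckeAux

variable {n : ℕ}

lemma main_ind (a c : Rq) (hac : a * T 1 = c) (h2 : 1 + c - a = c * a) :
    ∀ m : ℕ, m ≤ n →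
      (∀ j, j + 2 ≤ m → tt n j * EE n a m = c • EE n a m) ∧
      (∀ j, j + 2 ≤ m → EE n a m * tt n j = c • EE n a m) := by
  subst hac
  intro m
  induction m with
  | zero => exact fun _ => ⟨fun j hj => by omega, fun j hj => by omega⟩
  | succ m IH =>
    intro hm
    obtain ⟨IHL, IHR⟩ := IH (by omega)
    constructor
    · -- left version
      intro j hj
      by_cases hj2 : j + 2 ≤ m
      · have hEs : EE n a (m+1) = EE n a m * DD n a (m+1) := rfl
        rw [hEs, ← mul_assoc, IHL j hj2, smul_mul_assoc]
      · -- j + 2 = m + 1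
        have hjm : m = j + 1 := by omega
        subst hjm
        cases j with
        | zero =>
          have hE2 : EE n a 2 = 1 * 1 * (1 + algebraMap Rq _ a * (tt n 0 * 1)) := rfl
          have q0 : tt n 0 * tt n 0 =
              (T 1 : Rq) • (1 : HeckeAlgebra n) + (T 1 - 1 : Rq) • tt n 0 := by
            rw [t_quad n (by omega), Algebra.smul_def, Algebra.smul_def, mul_one]
          rw [hE2]
          simp only [one_mul, mul_one, ← Algebra.smul_def]
          rw [mul_add, mul_one, mul_smul_comm, q0]
          match_scalars <;> first | ring1 | linear_combination h2 | linear_combination -h2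
        | succ k =>
          show tt n (k+1) * EE n a (k+3) = (a * T 1) • EE n a (k+3)
          have hkn : k + 1 < n - 1 := by omega
          set t1 := tt n (k+1) with ht1
          set t0 := tt n k with ht0
          set Dk := DT n a (k+1) with hDk
          set E1 := EE n a (k+2) with hE1def
          have f2 : EE n a (k+3) = DT n a (k+3) * E1 := by
            have h' : EE n a (k+3) = EE n a (k+2) * DD n a (k+3) := rfl
            rw [h', hE1def, AA]
          have f3 : DT n a (k+3) = 1 + a • (DT n a (k+2) * t1) := by
            rw [show DT n a (k+3) = 1 + algebraMap Rq _ a * (DT n a (k+2) * tt n (k+1)) from rfl,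
              ← Algebra.smul_def]
          have f4 : DT n a (k+2) = 1 + a • (Dk * t0) := by
            rw [show DT n a (k+2) = 1 + algebraMap Rq _ a * (DT n a (k+1) * tt n k) from rfl,
              ← Algebra.smul_def]
          have braid : t0 * t1 * t0 = t1 * t0 * t1 := t_braid n hkn
          have braid' : ∀ x : HeckeAlgebra n, t1 * (t0 * (t1 * x)) = t0 * (t1 * (t0 * x)) := by
            intro x
            calc t1 * (t0 * (t1 * x)) = (t1 * t0 * t1) * x := by simp only [mul_assoc]
              _ = (t0 * t1 * t0) * x := by rw [braid]
              _ = t0 * (t1 * (t0 * x)) := by simp only [mul_assoc]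
          have quad : t1 * t1 = (T 1 : Rq) • (1 : HeckeAlgebra n) + (T 1 - 1 : Rq) • t1 := by
            rw [ht1, t_quad n (by omega), Algebra.smul_def, Algebra.smul_def, mul_one]
          have quad' : ∀ x : HeckeAlgebra n,
              t1 * (t1 * x) = (T 1 : Rq) • x + (T 1 - 1 : Rq) • (t1 * x) := by
            intro x
            rw [← mul_assoc, quad, add_mul, smul_mul_assoc, smul_mul_assoc, one_mul]
          have commDk' : ∀ x : HeckeAlgebra n, t1 * (Dk * x) = Dk * (t1 * x) := by
            intro x
            rw [← mul_assoc, (t_DT_comm a (le_refl (k+1))).eq, mul_assoc]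
          have ihk : t0 * E1 = (a * T 1) • E1 := IHL k (by omega)
          rw [f2, f3, f4]
          simp only [mul_add, add_mul, one_mul, mul_one, smul_mul_assoc, mul_smul_comm,
            smul_add, smul_smul, mul_assoc, commDk', braid', quad', ihk]
          match_scalars <;> first | ring1 | linear_combination h2 | linear_combination -h2
    · -- right version
      intro j hj
      by_cases hj2 : j + 2 ≤ m
      · have hEs : EE n a (m+1) = EE n a m * DD n a (m+1) := rfl
        rw [hEs, AA, mul_assoc, IHR j hj2, mul_smul_comm, ← AA]
      · have hjm : m = j + 1 := by omega
        subst hjm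
        cases j with
        | zero =>
          have hE2 : EE n a 2 = 1 * 1 * (1 + algebraMap Rq _ a * (tt n 0 * 1)) := rfl
          have q0 : tt n 0 * tt n 0 =
              (T 1 : Rq) • (1 : HeckeAlgebra n) + (T 1 - 1 : Rq) • tt n 0 := by
            rw [t_quad n (by omega), Algebra.smul_def, Algebra.smul_def, mul_one]
          rw [hE2]
          simp only [one_mul, mul_one, ← Algebra.smul_def]
          rw [add_mul, one_mul, smul_mul_assoc, q0]
          match_scalars <;> first | ring1 | linear_combination h2 | linear_combination -h2
        | succ k =>
          show EE n a (k+3) * tt n (k+1) = (a * T 1) • EE n a (k+3)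
          have hkn : k + 1 < n - 1 := by omega
          set t1 := tt n (k+1) with ht1
          set t0 := tt n k with ht0
          set Dk1 := DD n a (k+1) with hDk1
          set E1 := EE n a (k+2) with hE1def
          have f2 : EE n a (k+3) = E1 * DD n a (k+3) := rfl
          have f3 : DD n a (k+3) = 1 + a • (t1 * DD n a (k+2)) := by
            rw [show DD n a (k+3) = 1 + algebraMap Rq _ a * (tt n (k+1) * DD n a (k+2)) from rfl,
              ← Algebra.smul_def]
          have f4 : DD n a (k+2) = 1 + a • (t0 * Dk1) := by
            rw [show DD n a (k+2) = 1 + algebraMap Rq _ a * (tt n k * DD n a (k+1)) from rfl,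
              ← Algebra.smul_def]
          have braid : t0 * t1 * t0 = t1 * t0 * t1 := t_braid n hkn
          have braid' : ∀ x : HeckeAlgebra n, t1 * (t0 * (t1 * x)) = t0 * (t1 * (t0 * x)) := by
            intro x
            calc t1 * (t0 * (t1 * x)) = (t1 * t0 * t1) * x := by simp only [mul_assoc]
              _ = (t0 * t1 * t0) * x := by rw [braid]
              _ = t0 * (t1 * (t0 * x)) := by simp only [mul_assoc]
          have quad : t1 * t1 = (T 1 : Rq) • (1 : HeckeAlgebra n) + (T 1 - 1 : Rq) • t1 := by
            rw [ht1, t_quad n (by omega), Algebra.smul_def, Algebra.smul_def, mul_one]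
          have quad' : ∀ x : HeckeAlgebra n,
              t1 * (t1 * x) = (T 1 : Rq) • x + (T 1 - 1 : Rq) • (t1 * x) := by
            intro x
            rw [← mul_assoc, quad, add_mul, smul_mul_assoc, smul_mul_assoc, one_mul]
          have commR : Dk1 * t1 = t1 * Dk1 := ((t_DD_comm a (le_refl (k+1)))).eq.symm
          have ihkR : E1 * t0 = (a * T 1) • E1 := IHR k (by omega)
          have ihkR' : ∀ x : HeckeAlgebra n, E1 * (t0 * x) = (a * T 1) • (E1 * x) := by
            intro x
            rw [← mul_assoc, ihkR, smul_mul_assoc]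
          rw [f2, f3, f4]
          simp only [mul_add, add_mul, one_mul, mul_one, smul_mul_assoc, mul_smul_comm,
            smul_add, smul_smul, mul_assoc, commR, braid', quad, quad', ihkR, ihkR']
          match_scalars <;> first | ring1 | linear_combination h2 | linear_combination -h2

end HeckeAux

namespace HeckeAux

variable {n : ℕ}

section pair

variable (a c : Rq)

/-- every `x` acts on `E = EE n a n` through the character -/
lemma xE_eq (hc : c * c = T 1 + (T 1 - 1) * c)
    (hac : a * T 1 = c) (h2 : 1 + c - a = c * a) (x : HeckeAlgebra n) :
    x * EE n a n = (ch n c hc x) • EE n a n ∧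
      EE n a n * x = (ch n c hc x) • EE n a n := by
  obtain ⟨y, rfl⟩ := RingQuot.mkAlgHom_surjective Rq (HeckeRel n) x
  rw [show RingQuot.mkAlgHom Rq (HeckeRel n) = mkH n from rfl]
  induction y using FreeAlgebra.induction with
  | grade0 r =>
    rw [AlgHom.commutes, AlgHom.commutes]
    constructor
    · rw [← Algebra.smul_def]
      simp
    · rw [← Algebra.commutes, ← Algebra.smul_def]
      simp
  | grade1 i =>
    have hi : (i : ℕ) < n - 1 := i.isLt
    have hmk : mkH n (FreeAlgebra.ι Rq i) = tt n i := by
      rw [tt, dif_pos hi]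
    rw [hmk, ch_t n c hc hi]
    have h := main_ind a c hac h2 n (le_refl n)
    exact ⟨h.1 i (by omega), h.2 i (by omega)⟩
  | mul x y hx hy =>
    rw [map_mul, map_mul]
    constructor
    · rw [mul_assoc, hy.1, mul_smul_comm, hx.1, smul_smul, mul_comm (ch n c hc (mkH n y))]
    · rw [← mul_assoc, hx.2, smul_mul_assoc, hy.2, smul_smul]
  | add x y hx hy =>
    rw [map_add, map_add]
    constructor
    · rw [add_mul, hx.1, hy.1, ← add_smul]
    · rw [mul_add, hx.2, hy.2, ← add_smul]

lemma EE_central (hc : c * c = T 1 + (T 1 - 1) * c) (hac : a * T 1 = c) (h2 : 1 + c - a = c * a) :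
    EE n a n ∈ Subalgebra.center Rq (HeckeAlgebra n) := by
  rw [Subalgebra.mem_center_iff]
  intro x
  rw [(xE_eq a c hc hac h2 x).1, (xE_eq a c hc hac h2 x).2]


end pair

/-- evaluation `q ↦ 1` -/
def Φ : Rq →ₐ[ℤ] ℤ := (AddMonoidAlgebra.lift ℤ ℤ ℤ) 1

lemma Φ_T (k : ℤ) : Φ (T k) = 1 := by
  rw [Φ, T, AddMonoidAlgebra.lift_single]
  simp

lemma Φ_DD (a c : Rq) (hc : c * c = T 1 + (T 1 - 1) * c) (hΦ : Φ a * Φ c = 1) :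
    ∀ m : ℕ, m ≤ n → 0 < Φ (ch n c hc (DD n a m))
  | 0, _ => by rw [show DD n a 0 = 1 from rfl]; simp
  | 1, _ => by rw [show DD n a 1 = 1 from rfl]; simp
  | (m+2), h => by
    rw [show DD n a (m+2) = 1 + algebraMap Rq _ a * (tt n m * DD n a (m+1)) from rfl]
    rw [map_add, map_one, map_mul, map_mul, AlgHom.commutes, ch_t n c hc (by omega),
      map_add, map_one, map_mul, map_mul]
    rw [Algebra.algebraMap_self, RingHom.id_apply, ← mul_assoc, hΦ, one_mul]
    have := Φ_DD a c hc hΦ (m+1) (by omega)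
    omega

lemma Φ_EE (a c : Rq) (hc : c * c = T 1 + (T 1 - 1) * c) (hΦ : Φ a * Φ c = 1) :
    ∀ m : ℕ, m ≤ n → 0 < Φ (ch n c hc (EE n a m))
  | 0, _ => by rw [show EE n a 0 = 1 from rfl]; simp
  | (m+1), h => by
    rw [show EE n a (m+1) = EE n a m * DD n a (m+1) from rfl, map_mul, map_mul]
    exact mul_pos (Φ_EE a c hc hΦ m (by omega)) (Φ_DD a c hc hΦ (m+1) h)

lemma EE_ne_zero (a c : Rq) (hc : c * c = T 1 + (T 1 - 1) * c) (hΦ : Φ a * Φ c = 1) :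
    ch n c hc (EE n a n) ≠ 0 := by
  intro h
  have := Φ_EE a c hc hΦ n (le_refl n)
  rw [h] at this
  simp at this

/-- the opposite character kills `EE` -/
lemma EE_vanish (a c' : Rq) (hc' : c' * c' = T 1 + (T 1 - 1) * c') (h0 : 1 + a * c' = 0)
    (hn2 : 2 ≤ n) : ∀ m : ℕ, 2 ≤ m → ch n c' hc' (EE n a m) = 0
  | 2, _ => by
    rw [show EE n a 2 = 1 * 1 * (1 + algebraMap Rq _ a * (tt n 0 * 1)) from rfl]
    rw [one_mul, one_mul, mul_one, map_add, map_one, map_mul, AlgHom.commutes,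
      ch_t n c' hc' (by omega)]
    exact h0
  | (m+3), _ => by
    rw [show EE n a (m+3) = EE n a (m+2) * DD n a (m+3) from rfl, map_mul,
      EE_vanish a c' hc' h0 hn2 (m+2) (by omega), zero_mul]

/-- the two characters -/
lemma hcq : (T 1 : Rq) * T 1 = T 1 + (T 1 - 1) * T 1 := by ring
lemma hcm : (-1 : Rq) * (-1) = T 1 + (T 1 - 1) * (-1) := by ring

def θq : HeckeAlgebra n →ₐ[Rq] Rq := ch n (T 1) hcq
def θm : HeckeAlgebra n →ₐ[Rq] Rq := ch n (-1) hcm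

/-- the congruence `θq x ≡ θm x mod (T 1 + 1)` -/
lemma congruence (x : HeckeAlgebra n) :
    θq (n := n) x - θm (n := n) x ∈ Ideal.span {(T 1 + 1 : Rq)} := by
  obtain ⟨y, rfl⟩ := RingQuot.mkAlgHom_surjective Rq (HeckeRel n) x
  rw [show RingQuot.mkAlgHom Rq (HeckeRel n) = mkH n from rfl]
  induction y using FreeAlgebra.induction with
  | grade0 r => simp only [AlgHom.commutes, sub_self]; exact Ideal.zero_mem _
  | grade1 i =>
    have hi : (i : ℕ) < n - 1 := i.isLt
    have hmk : mkH n (FreeAlgebra.ι Rq i) = tt n i := by rw [tt, dif_pos hi]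
    rw [hmk, θq, θm, ch_t n _ hcq hi, ch_t n _ hcm hi, sub_neg_eq_add]
    exact Ideal.subset_span rfl
  | mul x y hx hy =>
    simp only [map_mul]
    have : θq (n := n) (mkH n x) * θq (n := n) (mkH n y) -
        θm (n := n) (mkH n x) * θm (n := n) (mkH n y)
        = θq (n := n) (mkH n x) * (θq (n := n) (mkH n y) - θm (n := n) (mkH n y)) +
          (θq (n := n) (mkH n x) - θm (n := n) (mkH n x)) * θm (n := n) (mkH n y) := by ring
    rw [this]
    exact Ideal.add_mem _ (Ideal.mul_mem_left _ _ hy) (Ideal.mul_mem_right _ _ hx)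
  | add x y hx hy =>
    simp only [map_add]
    have : θq (n := n) (mkH n x) + θq (n := n) (mkH n y) -
        (θm (n := n) (mkH n x) + θm (n := n) (mkH n y))
        = (θq (n := n) (mkH n x) - θm (n := n) (mkH n x)) +
          (θq (n := n) (mkH n y) - θm (n := n) (mkH n y)) := by ring
    rw [this]
    exact Ideal.add_mem _ hx hy

end HeckeAux

namespace HeckeAux

/-- top degree of a nonzero Laurent polynomial -/
def topd (f : Rq) (hf : f ≠ 0) : ℤ :=
  f.coeff.support.max' (Finsupp.support_nonempty_iff.mpr (mt AddMonoidAlgebra.coeff_eq_zero.mp hf))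

def botd (f : Rq) (hf : f ≠ 0) : ℤ :=
  f.coeff.support.min' (Finsupp.support_nonempty_iff.mpr (mt AddMonoidAlgebra.coeff_eq_zero.mp hf))

lemma topd_mem (f : Rq) (hf : f ≠ 0) : topd f hf ∈ f.coeff.support := Finset.max'_mem _ _

lemma botd_mem (f : Rq) (hf : f ≠ 0) : botd f hf ∈ f.coeff.support := Finset.min'_mem _ _

lemma le_topd (f : Rq) (hf : f ≠ 0) {z : ℤ} (hz : z ∈ f.coeff.support) : z ≤ topd f hf :=
  Finset.le_max' _ _ hz

lemma botd_le (f : Rq) (hf : f ≠ 0) {z : ℤ} (hz : z ∈ f.coeff.support) : botd f hf ≤ z :=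
  Finset.min'_le _ _ hz

lemma top_coeff (f g : Rq) (hf : f ≠ 0) (hg : g ≠ 0) :
    (f * g).coeff (topd f hf + topd g hg) = f.coeff (topd f hf) * g.coeff (topd g hg) := by
  classical
  rw [AddMonoidAlgebra.coeff_mul]
  rw [Finsupp.sum, Finset.sum_eq_single (topd f hf)]
  · rw [Finsupp.sum, Finset.sum_eq_single (topd g hg)]
    · rw [if_pos rfl]
    · intro b hb hne
      rw [if_neg]
      have := le_topd g hg hb
      omega
    · intro h; exact absurd (topd_mem g hg) h
  · intro b hb hne
    apply Finset.sum_eq_zero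
    intro a2 ha2
    have h1 := le_topd f hf hb
    have h2 := le_topd g hg ha2
    exact if_neg (by omega)
  · intro h; exact absurd (topd_mem f hf) h

lemma bot_coeff (f g : Rq) (hf : f ≠ 0) (hg : g ≠ 0) :
    (f * g).coeff (botd f hf + botd g hg) = f.coeff (botd f hf) * g.coeff (botd g hg) := by
  classical
  rw [AddMonoidAlgebra.coeff_mul]
  rw [Finsupp.sum, Finset.sum_eq_single (botd f hf)]
  · rw [Finsupp.sum, Finset.sum_eq_single (botd g hg)]
    · rw [if_pos rfl]
    · intro b hb hne
      rw [if_neg]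
      have := botd_le g hg hb
      omega
    · intro h; exact absurd (botd_mem g hg) h
  · intro b hb hne
    apply Finset.sum_eq_zero
    intro a2 ha2
    have h1 := botd_le f hf hb
    have h2 := botd_le g hg ha2
    exact if_neg (by omega)
  · intro h; exact absurd (botd_mem f hf) h

lemma support_mul_subset (f g : Rq) {z : ℤ} (hz : z ∈ (f * g).coeff.support) :
    ∃ z1 ∈ f.coeff.support, ∃ z2 ∈ g.coeff.support, z1 + z2 = z := by
  classical
  have := AddMonoidAlgebra.support_coeff_mul_subset f g hz
  rw [Finset.mem_add] at this
  obtain ⟨a, ha, b, hb, hab⟩ := this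
  exact ⟨a, ha, b, hb, hab⟩

lemma top_mul (f g : Rq) (hf : f ≠ 0) (hg : g ≠ 0) :
    ∃ hfg : f * g ≠ 0, topd (f * g) hfg = topd f hf + topd g hg := by
  have hco : (f * g).coeff (topd f hf + topd g hg) ≠ 0 := by
    rw [top_coeff f g hf hg]
    exact mul_ne_zero (Finsupp.mem_support_iff.mp (topd_mem f hf))
      (Finsupp.mem_support_iff.mp (topd_mem g hg))
  have hmem : topd f hf + topd g hg ∈ (f * g).coeff.support := Finsupp.mem_support_iff.mpr hco
  have hfg : f * g ≠ 0 := by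
    intro h
    rw [h] at hmem
    simp at hmem
  refine ⟨hfg, le_antisymm ?_ (le_topd _ hfg hmem)⟩
  apply Finset.max'_le
  intro z hz
  obtain ⟨z1, hz1, z2, hz2, rfl⟩ := support_mul_subset f g hz
  have := le_topd f hf hz1
  have := le_topd g hg hz2
  omega

lemma bot_mul (f g : Rq) (hf : f ≠ 0) (hg : g ≠ 0) :
    ∃ hfg : f * g ≠ 0, botd (f * g) hfg = botd f hf + botd g hg := by
  have hco : (f * g).coeff (botd f hf + botd g hg) ≠ 0 := by
    rw [bot_coeff f g hf hg]
    exact mul_ne_zero (Finsupp.mem_support_iff.mp (botd_mem f hf))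
      (Finsupp.mem_support_iff.mp (botd_mem g hg))
  have hmem : botd f hf + botd g hg ∈ (f * g).coeff.support := Finsupp.mem_support_iff.mpr hco
  have hfg : f * g ≠ 0 := by
    intro h
    rw [h] at hmem
    simp at hmem
  refine ⟨hfg, le_antisymm (botd_le _ hfg hmem) ?_⟩
  apply Finset.le_min'
  intro z hz
  obtain ⟨z1, hz1, z2, hz2, rfl⟩ := support_mul_subset f g hz
  have := botd_le f hf hz1
  have := botd_le g hg hz2
  omega

lemma stable_const (x c₀ : Rq) (hc₀ : c₀ ≠ 0) (W : Finset ℤ)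
    (hW : ∀ k : ℕ, ∀ z ∈ (x ^ k * c₀).coeff.support, z ∈ W) :
    ∃ z : ℤ, x = LaurentPolynomial.C z := by
  by_cases hx : x = 0
  · exact ⟨0, by rw [hx, map_zero]⟩
  · have key : ∀ k : ℕ, ∃ h : x ^ k * c₀ ≠ 0,
        topd _ h = k * topd x hx + topd c₀ hc₀ ∧
        botd _ h = k * botd x hx + botd c₀ hc₀ := by
      intro k
      induction k with
      | zero => refine ⟨by simpa using hc₀, ?_, ?_⟩ <;> · simp only [pow_zero, one_mul]; simp
      | succ k IH =>
        obtain ⟨hk, htop, hbot⟩ := IH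
        have hx' : x ^ (k+1) * c₀ = x * (x ^ k * c₀) := by
          rw [pow_succ', mul_assoc]
        obtain ⟨h1, h2⟩ := top_mul x (x ^ k * c₀) hx hk
        obtain ⟨h1', h2'⟩ := bot_mul x (x ^ k * c₀) hx hk
        refine ⟨by rw [hx']; exact h1, ?_, ?_⟩
        · rw [show topd (x ^ (k+1) * c₀) _ = topd (x * (x ^ k * c₀)) h1 by congr 1]
          rw [h2, htop]; push_cast; ring
        · rw [show botd (x ^ (k+1) * c₀) _ = botd (x * (x ^ k * c₀)) h1' by congr 1]
          rw [h2', hbot]; push_cast; ring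
    have hmemW : ∀ k : ℕ, ((k : ℤ) * topd x hx + topd c₀ hc₀) ∈ W := by
      intro k
      obtain ⟨h, htop, _⟩ := key k
      exact hW k _ (htop ▸ topd_mem _ h)
    have hmemW' : ∀ k : ℕ, ((k : ℤ) * botd x hx + botd c₀ hc₀) ∈ W := by
      intro k
      obtain ⟨h, _, hbot⟩ := key k
      exact hW k _ (hbot ▸ botd_mem _ h)
    have htx : topd x hx = 0 := by
      by_contra htx
      have hinj : Function.Injective (fun k : ℕ => (k : ℤ) * topd x hx + topd c₀ hc₀) := by
        intro k1 k2 h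
        simp only at h
        have : (k1 : ℤ) = k2 := by
          have := mul_right_cancel₀ htx (by linarith : (k1 : ℤ) * topd x hx = k2 * topd x hx)
          exact this
        exact_mod_cast this
      have hsub : Set.range (fun k : ℕ => (k : ℤ) * topd x hx + topd c₀ hc₀) ⊆ ↑W := by
        rintro _ ⟨k, rfl⟩; exact hmemW k
      exact absurd (W.finite_toSet.subset hsub) (Set.infinite_range_of_injective hinj)
    have hbx : botd x hx = 0 := by
      by_contra hbx
      have hinj : Function.Injective (fun k : ℕ => (k : ℤ) * botd x hx + botd c₀ hc₀) := by
        intro k1 k2 h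
        simp only at h
        have : (k1 : ℤ) = k2 := by
          have := mul_right_cancel₀ hbx (by linarith : (k1 : ℤ) * botd x hx = k2 * botd x hx)
          exact this
        exact_mod_cast this
      have hsub : Set.range (fun k : ℕ => (k : ℤ) * botd x hx + botd c₀ hc₀) ⊆ ↑W := by
        rintro _ ⟨k, rfl⟩; exact hmemW' k
      exact absurd (W.finite_toSet.subset hsub) (Set.infinite_range_of_injective hinj)
    refine ⟨x.coeff 0, ?_⟩
    rw [← single_eq_C]
    apply AddMonoidAlgebra.ext
    apply Finsupp.ext
    intro z
    by_cases hz : z = 0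
    · subst hz; rw [AddMonoidAlgebra.coeff_single, Finsupp.single_apply, if_pos rfl]
    · rw [AddMonoidAlgebra.coeff_single, Finsupp.single_apply, if_neg (Ne.symm hz)]
      by_contra hnz
      have hzs : z ∈ x.coeff.support := Finsupp.mem_support_iff.mpr hnz
      have := le_topd x hx hzs
      have := botd_le x hx hzs
      omega

lemma span_stable_const (x : Rq) (s : Finset Rq) (c₀ : Rq) (hc₀s : c₀ ∈ s) (hc₀ : c₀ ≠ 0)
    (hst : ∀ y ∈ Submodule.span ℤ (s : Set Rq), x * y ∈ Submodule.span ℤ (s : Set Rq)) :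
    ∃ z : ℤ, x = LaurentPolynomial.C z := by
  classical
  set W : Finset ℤ := s.biUnion (fun y => y.coeff.support) with hW
  have hsupp : ∀ y ∈ Submodule.span ℤ (s : Set Rq), ∀ z ∈ y.coeff.support, z ∈ W := by
    intro y hy
    induction hy using Submodule.span_induction with
    | mem y hys => intro z hz; exact Finset.mem_biUnion.mpr ⟨y, hys, hz⟩
    | zero => intro z hz; simp at hz
    | add y1 y2 h1 h2 ih1 ih2 =>
      intro z hz
      rw [AddMonoidAlgebra.coeff_add] at hz
      rcases Finset.mem_union.mp (Finsupp.support_add hz) with h | h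
      · exact ih1 z h
      · exact ih2 z h
    | smul a y hy ih => intro z hz; rw [AddMonoidAlgebra.coeff_smul] at hz; exact ih z (Finsupp.support_smul hz)
  have hpow : ∀ k : ℕ, x ^ k * c₀ ∈ Submodule.span ℤ (s : Set Rq) := by
    intro k
    induction k with
    | zero => simpa using Submodule.subset_span hc₀s
    | succ k IH =>
      have : x ^ (k+1) * c₀ = x * (x ^ k * c₀) := by rw [pow_succ', mul_assoc]
      rw [this]
      exact hst _ IH
  exact stable_const x c₀ hc₀ W (fun k => hsupp _ (hpow k))

end HeckeAux

namespace HeckeAux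

/-- evaluation `q ↦ -1` -/
def Ψ : Rq →ₐ[ℤ] ℤ :=
  (AddMonoidAlgebra.lift ℤ ℤ ℤ) ((Units.coeHom ℤ).comp (zpowersHom ℤˣ (-1)))

lemma Ψ_T (k : ℤ) : Ψ (T k) = (((-1 : ℤˣ) ^ k : ℤˣ) : ℤ) := by
  rw [Ψ, T, AddMonoidAlgebra.lift_single]
  simp [zpowersHom]

lemma Ψ_T_one : Ψ (T 1) = -1 := by rw [Ψ_T]; simp

lemma Ψ_C (d : ℤ) : Ψ (LaurentPolynomial.C d) = d := by
  rw [← single_eq_C, Ψ, AddMonoidAlgebra.lift_single]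
  simp

end HeckeAux

open HeckeAux in

set_option maxHeartbeats 4000000 in
set_option synthInstance.maxHeartbeats 1000000 in
/-- For `n ≥ 3` there is no multiplicative `R`-basis of the centre of the
Iwahori–Hecke algebra `𝓗ₙ` of `Sₙ`, where `R = ℤ[q,q⁻¹]`. -/
theorem no_multiplicative_basis_center_hecke (n : ℕ) (hn : 3 ≤ n) :
    ¬ ∃ (ι : Type) (b : Module.Basis ι (LaurentPolynomial ℤ)
        (Subalgebra.center (LaurentPolynomial ℤ) (HeckeAlgebra n))),
      ∀ i j : ι, ∃ k : ι, b i * b j = b k := by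
  classical
  rintro ⟨ι, b, hmult⟩
  -- pair 1 : a = 1, c = T 1
  have hac1 : (1 : Rq) * T 1 = T 1 := one_mul _
  have h21 : (1 : Rq) + T 1 - 1 = T 1 * 1 := by ring
  -- pair 2 : a = - T (-1), c = -1
  have hT01 : (T (-1) : Rq) * T 1 = 1 := by
    rw [← T_add]; norm_num
  have hac2 : (- T (-1) : Rq) * T 1 = -1 := by rw [neg_mul, hT01]
  have h22 : (1 : Rq) + (-1) - (- T (-1)) = (-1) * (- T (-1)) := by ring
  -- the two central elements
  have hE1c : EE n 1 n ∈ Subalgebra.center Rq (HeckeAlgebra n) :=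
    EE_central 1 (T 1) hcq hac1 h21
  have hE2c : EE n (- T (-1)) n ∈ Subalgebra.center Rq (HeckeAlgebra n) :=
    EE_central (- T (-1)) (-1) hcm hac2 h22
  set E₁ : Subalgebra.center Rq (HeckeAlgebra n) := ⟨EE n 1 n, hE1c⟩ with hE₁
  set E₂ : Subalgebra.center Rq (HeckeAlgebra n) := ⟨EE n (- T (-1)) n, hE2c⟩ with hE₂
  -- the characters restricted to the centre
  set φ : Subalgebra.center Rq (HeckeAlgebra n) →ₐ[Rq] Rq :=
    (θq (n := n)).comp (Subalgebra.center Rq (HeckeAlgebra n)).val with hφ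
  set ψ : Subalgebra.center Rq (HeckeAlgebra n) →ₐ[Rq] Rq :=
    (θm (n := n)).comp (Subalgebra.center Rq (HeckeAlgebra n)).val with hψ
  -- character values
  have hΦ1 : Φ (1 : Rq) * Φ (T 1) = 1 := by rw [map_one, Φ_T, one_mul]
  have hΦ2 : Φ (- T (-1) : Rq) * Φ (-1 : Rq) = 1 := by
    rw [map_neg, map_neg, Φ_T, map_one]; ring
  have hφE₁ : φ E₁ ≠ 0 := EE_ne_zero 1 (T 1) hcq hΦ1
  have hψE₂ : ψ E₂ ≠ 0 := EE_ne_zero (- T (-1)) (-1) hcm hΦ2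
  have hψE₁ : ψ E₁ = 0 := EE_vanish 1 (-1) hcm (by norm_num) (by omega) n (by omega)
  -- nonvanishing of the elements themselves
  have hE₁ne : E₁ ≠ 0 := by
    intro h
    rw [h, map_zero] at hφE₁
    exact hφE₁ rfl
  have hE₂ne : E₂ ≠ 0 := by
    intro h
    rw [h, map_zero] at hψE₂
    exact hψE₂ rfl
  -- the action of the centre on E₁ and E₂
  have hxw1 : ∀ z : Subalgebra.center Rq (HeckeAlgebra n), z * E₁ = (φ z) • E₁ := by
    intro z
    apply Subtype.ext
    rw [MulMemClass.coe_mul, SetLike.val_smul, hφ, AlgHom.comp_apply, Subalgebra.coe_val, hE₁]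
    exact (xE_eq 1 (T 1) hcq hac1 h21 (z : HeckeAlgebra n)).1
  have hxw2 : ∀ z : Subalgebra.center Rq (HeckeAlgebra n), z * E₂ = (ψ z) • E₂ := by
    intro z
    apply Subtype.ext
    rw [MulMemClass.coe_mul, SetLike.val_smul, hψ, AlgHom.comp_apply, Subalgebra.coe_val, hE₂]
    exact (xE_eq (- T (-1)) (-1) hcm hac2 h22 (z : HeckeAlgebra n)).1
  -- the key integrality lemma
  have key : ∀ (w : Subalgebra.center Rq (HeckeAlgebra n)), w ≠ 0 →
      ∀ (χ : Subalgebra.center Rq (HeckeAlgebra n) →ₐ[Rq] Rq),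
      (∀ z : Subalgebra.center Rq (HeckeAlgebra n), z * w = (χ z) • w) → ∀ β : ι, ∃ zz : ℤ, χ (b β) = LaurentPolynomial.C zz := by
    intro w hw χ hxw β
    set cc := b.repr w with hcc
    set k : ι → ι := fun i => (hmult β i).choose with hkdef
    have hk : ∀ i : ι, b β * b i = b (k i) := fun i => (hmult β i).choose_spec
    have hmd : Finsupp.mapDomain k cc = χ (b β) • cc := by
      have h1 : b β * w = Finsupp.linearCombination Rq ⇑b (Finsupp.mapDomain k cc) := by
        conv_lhs => rw [← b.linearCombination_repr w]
        rw [Finsupp.linearCombination_mapDomain, Finsupp.linearCombination_apply,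
          Finsupp.linearCombination_apply, Finsupp.sum, Finsupp.sum, Finset.mul_sum]
        apply Finset.sum_congr rfl
        intro i _
        rw [Function.comp_apply, mul_smul_comm, hk i]
      have h2 : χ (b β) • w = Finsupp.linearCombination Rq ⇑b (χ (b β) • cc) := by
        rw [map_smul, b.linearCombination_repr]
      have h3 := (h1.symm.trans ((hxw (b β)).trans h2))
      have := congrArg b.repr h3
      rwa [Module.Basis.repr_linearCombination, Module.Basis.repr_linearCombination] at this
    set s : Finset Rq := cc.support.image cc with hs
    have h4 : ∀ m : ι, χ (b β) * cc m ∈ Submodule.span ℤ (↑s : Set Rq) := by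
      intro m
      have hm := DFunLike.congr_fun hmd m
      rw [Finsupp.smul_apply, smul_eq_mul] at hm
      rw [← hm, Finsupp.mapDomain, Finsupp.sum_apply]
      rw [Finsupp.sum]
      apply Submodule.sum_mem
      intro i hi
      rw [Finsupp.single_apply]
      by_cases hcase : k i = m
      · rw [if_pos hcase]
        exact Submodule.subset_span (Finset.mem_image.mpr ⟨i, hi, rfl⟩)
      · rw [if_neg hcase]
        exact Submodule.zero_mem _
    have hst : ∀ y ∈ Submodule.span ℤ (↑s : Set Rq),
        χ (b β) * y ∈ Submodule.span ℤ (↑s : Set Rq) := by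
      intro y hy
      induction hy using Submodule.span_induction with
      | mem y hys =>
        obtain ⟨m, hm, rfl⟩ := Finset.mem_image.mp hys
        exact h4 m
      | zero => rw [mul_zero]; exact Submodule.zero_mem _
      | add y1 y2 _ _ ih1 ih2 => rw [mul_add]; exact Submodule.add_mem _ ih1 ih2
      | smul a y _ ih => rw [mul_smul_comm]; exact Submodule.smul_mem _ _ ih
    -- a nonzero generator
    have hccne : cc ≠ 0 := by
      intro h
      apply hw
      have := congrArg b.repr.symm (hcc.symm.trans h)
      simpa using this
    obtain ⟨m₀, hm₀⟩ := Finsupp.ne_iff.mp hccne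
    simp only [Finsupp.coe_zero, Pi.zero_apply] at hm₀
    exact span_stable_const (χ (b β)) s (cc m₀)
      (Finset.mem_image.mpr ⟨m₀, Finsupp.mem_support_iff.mpr hm₀, rfl⟩) hm₀ hst
  -- conclude values are integers
  have hφint := key E₁ hE₁ne φ hxw1
  have hψint := key E₂ hE₂ne ψ hxw2
  -- congruence forces equality
  have hagree : ∀ β : ι, φ (b β) = ψ (b β) := by
    intro β
    obtain ⟨zx, hzx⟩ := hφint β
    obtain ⟨zy, hzy⟩ := hψint β
    have hcong : φ (b β) - ψ (b β) ∈ Ideal.span {(T 1 + 1 : Rq)} :=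
      congruence (n := n) ((b β : Subalgebra.center Rq (HeckeAlgebra n)) : HeckeAlgebra n)
    rw [hzx, hzy] at hcong
    obtain ⟨g, hg⟩ := Ideal.mem_span_singleton'.mp hcong
    have := congrArg Ψ hg
    rw [map_mul, map_sub, Ψ_C, Ψ_C, map_add, Ψ_T_one, map_one, neg_add_cancel,
      mul_zero] at this
    have hzz : zx = zy := by omega
    rw [hzx, hzy, hzz]
  -- so the two characters agree on the centre
  have hφψ : φ.toLinearMap = ψ.toLinearMap := Module.Basis.ext b (fun β => hagree β)
  have : φ E₁ = ψ E₁ := by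
    have := congrArg
      (fun L : Subalgebra.center Rq (HeckeAlgebra n) →ₗ[Rq] Rq => L E₁) hφψ
    simpa using this
  rw [hψE₁] at this
  exact hφE₁ this
end
end

section
/- Let e₁, …, e_t be elements of the centre of ℚSₙ that are idempotent (e_i² = e_i), pairwise orthogonal (e_i e_j = 0 for i ≠ j), and form a ℚ-basis of the centre of ℚSₙ. Let B be a multiplicative ℤ-basis of the centre of ℤSₙ and let b ∈ B. Then, viewing b as an element of ℚSₙ via the canonical inclusion ℤSₙ → ℚSₙ, there exist ε₁, …, ε_t ∈ {−1, 0, 1} such that b = Σᵢ εᵢ eᵢ. -/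
/-- The canonical ring embedding `ℤSₙ → ℚSₙ` induced by `ℤ → ℚ`. -/
noncomputable def intToRatGroupAlgebra (n : ℕ) :
    MonoidAlgebra ℤ (Equiv.Perm (Fin n)) →+* MonoidAlgebra ℚ (Equiv.Perm (Fin n)) :=
  MonoidAlgebra.liftNCRingHom
    ((algebraMap ℚ (MonoidAlgebra ℚ (Equiv.Perm (Fin n)))).comp (Int.castRingHom ℚ))
    (MonoidAlgebra.of ℚ (Equiv.Perm (Fin n)))
    (fun x _ => (Algebra.commutes ((x : ℚ)) _))

private lemma intToRat_of (n : ℕ) (σ : Equiv.Perm (Fin n)) :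
    intToRatGroupAlgebra n (MonoidAlgebra.of ℤ _ σ) = MonoidAlgebra.of ℚ _ σ := by
  simp [intToRatGroupAlgebra, MonoidAlgebra.liftNCRingHom, MonoidAlgebra.of_apply,
    MonoidAlgebra.liftNC_single]

private lemma rat_aux (x : ℚ) (a b : ℕ) (hab : a < b) (h : x ^ (a+1) = x ^ (b+1)) :
    x = -1 ∨ x = 0 ∨ x = 1 := by
  by_cases hx : x = 0
  · exact Or.inr (Or.inl hx)
  · have hd : b - a ≠ 0 := Nat.sub_ne_zero_of_lt hab
    have h2 : x ^ (a+1) * x ^ (b - a) = x ^ (a+1) * 1 := by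
      rw [mul_one, ← pow_add, h]; congr 1; omega
    have h3 : x ^ (b - a) = 1 := mul_left_cancel₀ (pow_ne_zero _ hx) h2
    rcases (pow_eq_one_iff_of_ne_zero hd).mp h3 with h | ⟨h, _⟩
    · exact Or.inr (Or.inr h)
    · exact Or.inl h

/-- If `e₁, …, e_t` are pairwise orthogonal central idempotents of `ℚSₙ` forming
a `ℚ`-basis of the centre of `ℚSₙ`, `B` is a multiplicative `ℤ`-basis of the
centre of `ℤSₙ` and `b ∈ B`, then in `ℚSₙ` one has `b = Σᵢ εᵢ eᵢ` with each
`εᵢ ∈ {-1, 0, 1}`. -/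
theorem multiplicative_basis_elt_eq_signed_sum_idempotents (n t : ℕ)
    (e : Fin t → MonoidAlgebra ℚ (Equiv.Perm (Fin n)))
    (hcentral : ∀ i, e i ∈ Subalgebra.center ℚ (MonoidAlgebra ℚ (Equiv.Perm (Fin n))))
    (hidem : ∀ i, e i * e i = e i)
    (horth : ∀ i j, i ≠ j → e i * e j = 0)
    (hindep : LinearIndependent ℚ e)
    (hspan : Submodule.span ℚ (Set.range e)
      = Subalgebra.toSubmodule
          (Subalgebra.center ℚ (MonoidAlgebra ℚ (Equiv.Perm (Fin n)))))
    {ι : Type}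
    (b : Module.Basis ι ℤ (Subalgebra.center ℤ (MonoidAlgebra ℤ (Equiv.Perm (Fin n)))))
    (hmult : ∀ i j : ι, ∃ k : ι, b i * b j = b k) (i₀ : ι) :
    ∃ ε : Fin t → ℤ, (∀ i, ε i = -1 ∨ ε i = 0 ∨ ε i = 1) ∧
      intToRatGroupAlgebra n ((b i₀ : MonoidAlgebra ℤ (Equiv.Perm (Fin n))))
        = ∑ i : Fin t, (ε i : ℚ) • e i := by
  classical
  let F : Subalgebra.center ℤ (MonoidAlgebra ℤ (Equiv.Perm (Fin n)))
      →+* MonoidAlgebra ℚ (Equiv.Perm (Fin n)) :=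
    (intToRatGroupAlgebra n).comp
      (Subalgebra.center ℤ (MonoidAlgebra ℤ (Equiv.Perm (Fin n)))).val.toRingHom
  have hFdef : ∀ x : Subalgebra.center ℤ (MonoidAlgebra ℤ (Equiv.Perm (Fin n))),
      F x = intToRatGroupAlgebra n (x : MonoidAlgebra ℤ (Equiv.Perm (Fin n))) :=
    fun _ => rfl
  set β : MonoidAlgebra ℚ (Equiv.Perm (Fin n)) := F (b i₀) with hβ
  -- β is central
  have hβc : β ∈ Subalgebra.center ℚ (MonoidAlgebra ℚ (Equiv.Perm (Fin n))) := by
    rw [Subalgebra.mem_center_iff]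
    intro x
    induction x using MonoidAlgebra.induction_on with
    | of σ =>
        have hcomm : MonoidAlgebra.of ℤ _ σ * (b i₀ : MonoidAlgebra ℤ (Equiv.Perm (Fin n)))
            = (b i₀ : MonoidAlgebra ℤ (Equiv.Perm (Fin n))) * MonoidAlgebra.of ℤ _ σ :=
          Subalgebra.mem_center_iff.mp (b i₀).2 _
        have h2 := congrArg (intToRatGroupAlgebra n) hcomm
        rw [map_mul, map_mul, intToRat_of] at h2
        rw [hβ, hFdef]
        exact h2
    | add x y hx hy => rw [add_mul, mul_add, hx, hy]
    | smul r x hx => rw [smul_mul_assoc, mul_smul_comm, hx]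
  -- write β in terms of the idempotent basis
  have hβspan : β ∈ Submodule.span ℚ (Set.range e) := by
    rw [hspan]; exact hβc
  obtain ⟨c, hc⟩ := (Submodule.mem_span_range_iff_exists_fun ℚ).mp hβspan
  -- powers of β
  have hpow : ∀ m : ℕ, β ^ (m+1) = ∑ i : Fin t, (c i) ^ (m+1) • e i := by
    intro m
    induction m with
    | zero => simpa using hc.symm
    | succ m ih =>
        rw [pow_succ, ih, ← hc, Finset.sum_mul]
        refine Finset.sum_congr rfl fun i _ => ?_
        rw [Finset.mul_sum]
        rw [Finset.sum_eq_single i]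
        · rw [smul_mul_smul_comm, hidem i, ← pow_succ]
        · intro j _ hj
          rw [smul_mul_smul_comm, horth i j (Ne.symm hj)]
          simp
        · intro h; exact absurd (Finset.mem_univ i) h
  -- powers of b i₀ stay in the basis
  have hP : ∀ m : ℕ, ∃ j : ι, (b i₀) ^ (m+1) = b j := by
    intro m
    induction m with
    | zero => exact ⟨i₀, pow_one _⟩
    | succ m ih =>
        obtain ⟨j, hj⟩ := ih
        obtain ⟨k, hk⟩ := hmult j i₀
        exact ⟨k, by rw [pow_succ, hj, hk]⟩
  choose p hp using hP
  -- ι is finite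
  have hfm : Module.Finite ℤ (MonoidAlgebra ℤ (Equiv.Perm (Fin n))) :=
    Module.Finite.equiv ((Finsupp.linearEquivFunOnFinite ℤ ℤ (Equiv.Perm (Fin n))).symm.trans
      (MonoidAlgebra.coeffLinearEquiv ℤ).symm)
  have hN : IsNoetherian ℤ (MonoidAlgebra ℤ (Equiv.Perm (Fin n))) := by infer_instance
  have hfin : Module.Finite ℤ (Subalgebra.center ℤ (MonoidAlgebra ℤ (Equiv.Perm (Fin n)))) :=
    Module.Finite.iff_fg.mpr
      (IsNoetherian.noetherian
        (Subalgebra.toSubmodule (Subalgebra.center ℤ (MonoidAlgebra ℤ (Equiv.Perm (Fin n))))))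
  have : Finite ι := Module.Finite.finite_basis b
  -- pigeonhole
  obtain ⟨m, m', hne, hpp⟩ := Finite.exists_ne_map_eq_of_infinite p
  have hbb : (b i₀) ^ (m+1) = (b i₀) ^ (m'+1) := by rw [hp m, hp m', hpp]
  have hββ : β ^ (m+1) = β ^ (m'+1) := by
    rw [hβ, ← map_pow F, ← map_pow F, hbb]
  rw [hpow m, hpow m'] at hββ
  -- equal coefficients
  have hcoef : ∀ i, (c i) ^ (m+1) = (c i) ^ (m'+1) := by
    have h0 : ∑ i : Fin t, ((c i) ^ (m+1) - (c i) ^ (m'+1)) • e i = 0 := by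
      simp only [sub_smul, Finset.sum_sub_distrib, hββ, sub_self]
    intro i
    have h1 := Fintype.linearIndependent_iff.mp hindep _ h0 i
    linarith [h1]
  have hval : ∀ i, c i = -1 ∨ c i = 0 ∨ c i = 1 := by
    intro i
    rcases hne.lt_or_gt with h | h
    · exact rat_aux _ _ _ h (hcoef i)
    · exact rat_aux _ _ _ h (hcoef i).symm
  refine ⟨fun i => if c i = 1 then 1 else if c i = -1 then -1 else 0, ?_, ?_⟩
  · intro i; dsimp only; split_ifs <;> simp
  · rw [show intToRatGroupAlgebra n ((b i₀ : MonoidAlgebra ℤ (Equiv.Perm (Fin n)))) = β from rfl,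
      ← hc]
    refine Finset.sum_congr rfl fun i _ => ?_
    rcases hval i with h | h | h <;> norm_num [h]
end

section
/- A ℤ-basis B of the group algebra ℤS₂ (which is commutative, hence equals its own centre) is multiplicative if and only if the set of basis elements equals {1, σ} or {1, −σ}, where σ denotes the image in ℤS₂ of the unique nontrivial permutation of a two-element set. In particular, there exist exactly two multiplicative bases for Z(ℤS₂). -/
namespace MultBasisS2Aux

noncomputable section

abbrev G := Equiv.Perm (Fin 2)
abbrev A := MonoidAlgebra ℤ G

def c : G := Equiv.swap 0 1
def σ : A := MonoidAlgebra.of ℤ G c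

def e1 : A →ₐ[ℤ] ℤ := MonoidAlgebra.lift ℤ ℤ G 1
def e2 : A →ₐ[ℤ] ℤ := MonoidAlgebra.lift ℤ ℤ G ((Units.coeHom ℤ).comp Equiv.Perm.sign)

lemma hG : ∀ g : G, g = 1 ∨ g = c := by decide
lemma hc1 : (1 : G) ≠ c := by decide
lemma hcc : c * c = 1 := by decide

lemma decomp (x : A) :
    x = MonoidAlgebra.single 1 (x.coeff 1) + MonoidAlgebra.single c (x.coeff c) := by
  ext g
  rcases hG g with rfl | rfl <;>
    erw [Finsupp.add_apply] <;>
    simp [MonoidAlgebra.single_apply, hc1, hc1.symm]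

lemma e1_single (g : G) (a : ℤ) : e1 (MonoidAlgebra.single g a) = a := by
  simp [e1, MonoidAlgebra.lift_single]

lemma sign_c : (Equiv.Perm.sign c : ℤ) = -1 := by decide

lemma e2_single_one (a : ℤ) : e2 (MonoidAlgebra.single (1 : G) a) = a := by
  simp [e2, MonoidAlgebra.lift_single]

lemma e2_single_c (a : ℤ) : e2 (MonoidAlgebra.single c a) = -a := by
  simp [e2, MonoidAlgebra.lift_single, sign_c]

lemma e1_apply (x : A) : e1 x = x.coeff 1 + x.coeff c := by
  conv_lhs => rw [decomp x]
  rw [map_add, e1_single, e1_single]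

lemma e2_apply (x : A) : e2 x = x.coeff 1 - x.coeff c := by
  conv_lhs => rw [decomp x]
  rw [map_add, e2_single_one, e2_single_c]; ring

lemma sigma_single : σ = MonoidAlgebra.single c 1 := rfl

lemma e1_sigma : e1 σ = 1 := by rw [sigma_single, e1_single]
lemma e2_sigma : e2 σ = -1 := by rw [sigma_single, e2_single_c]

lemma ne_1_neg1 : (1 : A) ≠ -1 := fun h => by
  have := congrArg e1 h; rw [map_one, map_neg, map_one] at this; omega
lemma ne_1_sigma : (1 : A) ≠ σ := fun h => by
  have := congrArg e2 h; rw [map_one, e2_sigma] at this; omega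
lemma ne_1_negsigma : (1 : A) ≠ -σ := fun h => by
  have := congrArg e1 h; rw [map_one, map_neg, e1_sigma] at this; omega
lemma ne_neg1_sigma : (-1 : A) ≠ σ := fun h => by
  have := congrArg e1 h; rw [map_neg, map_one, e1_sigma] at this; omega
lemma ne_neg1_negsigma : (-1 : A) ≠ -σ := fun h => by
  have := congrArg e2 h; rw [map_neg, map_neg, map_one, e2_sigma] at this; omega
lemma ne_sigma_negsigma : σ ≠ -σ := fun h => by
  have := congrArg e1 h; rw [map_neg, e1_sigma] at this; omega

lemma int_eq_of_pow_eq {t : ℤ} {m n : ℕ} (hmn : m < n) (h : t ^ m = t ^ n) :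
    t = 0 ∨ t = 1 ∨ t = -1 := by
  by_cases ht : t = 0
  · exact Or.inl ht
  · right
    have h1 : t ^ m * t ^ (n - m) = t ^ m * 1 := by
      rw [mul_one, ← pow_add]
      rw [h]; congr 1; omega
    have h2 : t ^ (n - m) = 1 := mul_left_cancel₀ (pow_ne_zero _ ht) h1
    have h3 : t * t ^ (n - m - 1) = 1 := by
      rw [← pow_succ']; rw [← h2]; congr 1; omega
    exact Int.isUnit_iff.mp (IsUnit.of_mul_eq_one _ h3)

lemma mem4 (x : A) (hx : x ≠ 0)
    (h1 : e1 x = 0 ∨ e1 x = 1 ∨ e1 x = -1)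
    (h2 : e2 x = 0 ∨ e2 x = 1 ∨ e2 x = -1) :
    x = 1 ∨ x = -1 ∨ x = σ ∨ x = -σ := by
  rw [e1_apply] at h1
  rw [e2_apply] at h2
  have hd := decomp x
  have H : (x.coeff 1 = 0 ∧ x.coeff c = 0) ∨ (x.coeff 1 = 1 ∧ x.coeff c = 0) ∨ (x.coeff 1 = -1 ∧ x.coeff c = 0) ∨
      (x.coeff 1 = 0 ∧ x.coeff c = 1) ∨ (x.coeff 1 = 0 ∧ x.coeff c = -1) := by omega
  rcases H with ⟨ha, hb⟩ | ⟨ha, hb⟩ | ⟨ha, hb⟩ | ⟨ha, hb⟩ | ⟨ha, hb⟩ <;>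
    rw [ha, hb] at hd
  · exact absurd (by simpa using hd) hx
  · left
    rw [hd]; simp [MonoidAlgebra.one_def]
  · right; left
    rw [hd]; simp [MonoidAlgebra.one_def, Finsupp.single_neg]
  · right; right; left
    rw [hd]; simp [sigma_single]
  · right; right; right
    rw [hd]; simp [sigma_single, Finsupp.single_neg]

end

end MultBasisS2Aux

open MultBasisS2Aux in
/-- A `ℤ`-basis of the group algebra `ℤS₂` (which is commutative, hence equal to
its own centre) is multiplicative if and only if its set of elements is
`{1, σ}` or `{1, -σ}`, where `σ` is the image in `ℤS₂` of the nontrivial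
permutation.  In particular there are exactly two multiplicative bases. -/
theorem multiplicative_basis_int_group_algebra_S2_iff {ι : Type}
    (b : Module.Basis ι ℤ (MonoidAlgebra ℤ (Equiv.Perm (Fin 2)))) :
    (∀ i j : ι, ∃ k : ι, b i * b j = b k) ↔
      (Set.range b = {1, MonoidAlgebra.of ℤ (Equiv.Perm (Fin 2)) (Equiv.swap 0 1)} ∨
       Set.range b = {1, -MonoidAlgebra.of ℤ (Equiv.Perm (Fin 2)) (Equiv.swap 0 1)}) := by
  classical
  have hσdef : MonoidAlgebra.of ℤ (Equiv.Perm (Fin 2)) (Equiv.swap 0 1) = σ := rfl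
  rw [hσdef]
  have hσσ : σ * σ = 1 := by
    rw [σ, ← map_mul, hcc, map_one]
  constructor
  · intro h
    -- ι is finite with exactly two elements
    have B0 : Module.Basis G ℤ A := MonoidAlgebra.basis G ℤ
    haveI : Finite ι :=
      basis_finite_of_finite_spans (Set.finite_range B0) B0.span_eq b
    haveI : Fintype ι := Fintype.ofFinite ι
    have hcard : Nat.card ι = 2 := by
      rw [Nat.card_eq_fintype_card, ← Module.finrank_eq_card_basis b,
        Module.finrank_eq_card_basis B0]
      simp [Fintype.card_perm]
    obtain ⟨i₀, i₁, hi01, huniv⟩ := Nat.card_eq_two_iff.mp hcard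
    have hmemidx : ∀ k : ι, k = i₀ ∨ k = i₁ := by
      intro k
      have : k ∈ ({i₀, i₁} : Set ι) := huniv ▸ Set.mem_univ k
      simpa using this
    have hrangeeq : Set.range ⇑b = {b i₀, b i₁} := by
      rw [← Set.image_univ, ← huniv, Set.image_pair]
    -- powers of basis elements are basis elements
    have hpow : ∀ (i : ι) (n : ℕ), ∃ k, b i ^ (n + 1) = b k := by
      intro i n
      induction n with
      | zero => exact ⟨i, by simp⟩
      | succ n ih =>
        obtain ⟨k, hk⟩ := ih
        obtain ⟨k', hk'⟩ := h k i
        exact ⟨k', by rw [pow_succ, hk, hk']⟩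
    -- every basis element is 1, -1, σ or -σ
    have hmem : ∀ i, b i = 1 ∨ b i = -1 ∨ b i = σ ∨ b i = -σ := by
      intro i
      obtain ⟨m, n, hmn, hgeq⟩ :=
        Finite.exists_ne_map_eq_of_infinite (fun n => Classical.choose (hpow i n))
      have hp : b i ^ (m + 1) = b i ^ (n + 1) := by
        rw [Classical.choose_spec (hpow i m), Classical.choose_spec (hpow i n), hgeq]
      have key : ∃ p q : ℕ, p < q ∧ b i ^ (p + 1) = b i ^ (q + 1) := by
        rcases lt_or_gt_of_ne hmn with hlt | hlt
        exacts [⟨m, n, hlt, hp⟩, ⟨n, m, hlt, hp.symm⟩]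
      obtain ⟨p, q, hpq, hppow⟩ := key
      have h1 := int_eq_of_pow_eq (t := e1 (b i)) (Nat.add_lt_add_right hpq 1)
        (by rw [← map_pow e1 (b i) (p + 1), ← map_pow e1 (b i) (q + 1), hppow])
      have h2 := int_eq_of_pow_eq (t := e2 (b i)) (Nat.add_lt_add_right hpq 1)
        (by rw [← map_pow e2 (b i) (p + 1), ← map_pow e2 (b i) (q + 1), hppow])
      exact mem4 (b i) (b.ne_zero i) h1 h2
    have hbne : b i₀ ≠ b i₁ := fun he => hi01 (b.injective he)
    have hsq : ∀ i, ∃ k, b k = b i * b i := fun i => (h i i).imp fun k hk => hk.symm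
    -- helper: if b i * b i = 1 then 1 is b i₀ or b i₁
    have hone : ∀ i, b i * b i = 1 → (1 : A) = b i₀ ∨ (1 : A) = b i₁ := by
      intro i hi
      obtain ⟨k, hk⟩ := hsq i
      rw [hi] at hk
      rcases hmemidx k with rfl | rfl
      · exact Or.inl hk.symm
      · exact Or.inr hk.symm
    rcases hmem i₀ with hb0 | hb0 | hb0 | hb0 <;> rcases hmem i₁ with hb1 | hb1 | hb1 | hb1
    -- {1,1}
    · exact absurd (hb0.trans hb1.symm) hbne
    -- {1,-1}
    · exfalso
      have hσtop : σ ∈ Submodule.span ℤ (Set.range ⇑b) := by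
        rw [b.span_eq]; trivial
      rw [hrangeeq, hb0, hb1] at hσtop
      obtain ⟨s, t, hst⟩ := Submodule.mem_span_pair.mp hσtop
      have h1 := congrArg e1 hst
      have h2 := congrArg e2 hst
      simp only [map_add, map_smul, map_one, map_neg, e1_sigma, e2_sigma,
        smul_eq_mul, mul_one, mul_neg] at h1 h2
      omega
    -- {1,σ}
    · left; rw [hrangeeq, hb0, hb1]
    -- {1,-σ}
    · right; rw [hrangeeq, hb0, hb1]
    -- {-1,1}
    · exfalso
      have hσtop : σ ∈ Submodule.span ℤ (Set.range ⇑b) := by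
        rw [b.span_eq]; trivial
      rw [hrangeeq, hb0, hb1] at hσtop
      obtain ⟨s, t, hst⟩ := Submodule.mem_span_pair.mp hσtop
      have h1 := congrArg e1 hst
      have h2 := congrArg e2 hst
      simp only [map_add, map_smul, map_one, map_neg, e1_sigma, e2_sigma,
        smul_eq_mul, mul_one, mul_neg] at h1 h2
      omega
    -- {-1,-1}
    · exact absurd (hb0.trans hb1.symm) hbne
    -- {-1,σ}
    · exfalso
      rcases hone i₀ (by rw [hb0, neg_mul_neg, one_mul]) with h' | h'
      · exact ne_1_neg1 (h'.trans hb0)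
      · exact ne_1_sigma (h'.trans hb1)
    -- {-1,-σ}
    · exfalso
      rcases hone i₀ (by rw [hb0, neg_mul_neg, one_mul]) with h' | h'
      · exact ne_1_neg1 (h'.trans hb0)
      · exact ne_1_negsigma (h'.trans hb1)
    -- {σ,1}
    · left; rw [hrangeeq, hb0, hb1, Set.pair_comm]
    -- {σ,-1}
    · exfalso
      rcases hone i₁ (by rw [hb1, neg_mul_neg, one_mul]) with h' | h'
      · exact ne_1_sigma (h'.trans hb0)
      · exact ne_1_neg1 (h'.trans hb1)
    -- {σ,σ}
    · exact absurd (hb0.trans hb1.symm) hbne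
    -- {σ,-σ}
    · exfalso
      rcases hone i₀ (by rw [hb0, hσσ]) with h' | h'
      · exact ne_1_sigma (h'.trans hb0)
      · exact ne_1_negsigma (h'.trans hb1)
    -- {-σ,1}
    · right; rw [hrangeeq, hb0, hb1, Set.pair_comm]
    -- {-σ,-1}
    · exfalso
      rcases hone i₁ (by rw [hb1, neg_mul_neg, one_mul]) with h' | h'
      · exact ne_1_negsigma (h'.trans hb0)
      · exact ne_1_neg1 (h'.trans hb1)
    -- {-σ,σ}
    · exfalso
      rcases hone i₀ (by rw [hb0, neg_mul_neg, hσσ]) with h' | h'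
      · exact ne_1_negsigma (h'.trans hb0)
      · exact ne_1_sigma (h'.trans hb1)
    -- {-σ,-σ}
    · exact absurd (hb0.trans hb1.symm) hbne
  · rintro (hr | hr) i j
    · have hi : b i ∈ Set.range ⇑b := Set.mem_range_self i
      have hj : b j ∈ Set.range ⇑b := Set.mem_range_self j
      rw [hr] at hi hj
      have hmem : b i * b j ∈ Set.range ⇑b := by
        rw [hr]
        rcases hi with hi | hi <;> rcases hj with hj | hj <;>
          rw [hi, hj] <;> simp [hσσ]
      obtain ⟨k, hk⟩ := hmem
      exact ⟨k, hk.symm⟩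
    · have hi : b i ∈ Set.range ⇑b := Set.mem_range_self i
      have hj : b j ∈ Set.range ⇑b := Set.mem_range_self j
      rw [hr] at hi hj
      have hmem : b i * b j ∈ Set.range ⇑b := by
        rw [hr]
        rcases hi with hi | hi <;> rcases hj with hj | hj <;>
          rw [hi, hj] <;> simp [hσσ, neg_mul_neg]
      obtain ⟨k, hk⟩ := hmem
      exact ⟨k, hk.symm⟩
end

section
/- Let R = ℤ[q,q⁻¹] and let 𝓗₂ = R[T]/(T² − (q−1)T − q) be the Iwahori–Hecke algebra of S₂, realized for instance as AdjoinRoot of the polynomial X² − C(q−1)·X − C(q) over R. Then there does not exist a multiplicative R-basis of 𝓗₂ (which is commutative, hence equals its own centre); i.e., there is no R-module basis B of 𝓗₂ such that for every b, b′ ∈ B there exists b″ ∈ B with b·b′ = b″. -/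
open Polynomial LaurentPolynomial

/-- The Iwahori–Hecke algebra `𝓗₂ = R[T]/(T² - (q-1)T - q)` of `S₂` over the
Laurent polynomial ring `R = ℤ[q,q⁻¹]`. -/
noncomputable abbrev HeckeS2 : Type :=
  AdjoinRoot (X ^ 2 - Polynomial.C (T 1 - 1) * X - Polynomial.C (T 1) :
    Polynomial (LaurentPolynomial ℤ))

namespace NMB

abbrev R := LaurentPolynomial ℤ

noncomputable abbrev f : Polynomial R := X ^ 2 - Polynomial.C (T 1 - 1) * X - Polynomial.C (T 1)

lemma T_sq : (T 1 : R) ^ 2 = T 2 := by rw [T_pow]; norm_num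

lemma hmonic : f.Monic := by
  have : f = X ^ 2 - (Polynomial.C (T 1 - 1) * X + Polynomial.C (T 1)) := by
    rw [f, sub_sub]
  rw [this]
  exact monic_X_pow_sub (lt_of_le_of_lt (degree_linear_le) (by decide))

lemma hp : f.eval₂ (RingHom.id R) (T 1) = 0 := by
  simp [f, eval₂_sub, eval₂_mul, eval₂_pow]
  ring_nf
  rw [← T_sq]
  ring

lemma hm : f.eval₂ (RingHom.id R) (-1) = 0 := by
  simp [f, eval₂_sub, eval₂_mul, eval₂_pow]

noncomputable def χp : HeckeS2 →+* R := AdjoinRoot.lift (RingHom.id R) (T 1) hp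
noncomputable def χm : HeckeS2 →+* R := AdjoinRoot.lift (RingHom.id R) (-1) hm

lemma χp_root : χp (AdjoinRoot.root f) = T 1 := AdjoinRoot.lift_root hp
lemma χm_root : χm (AdjoinRoot.root f) = -1 := AdjoinRoot.lift_root hm

lemma χp_smul (r : R) (z : HeckeS2) : χp (r • z) = r * χp z := by
  rw [Algebra.smul_def, map_mul, AdjoinRoot.algebraMap_eq, χp, AdjoinRoot.lift_of]
  rfl

lemma χm_smul (r : R) (z : HeckeS2) : χm (r • z) = r * χm z := by
  rw [Algebra.smul_def, map_mul, AdjoinRoot.algebraMap_eq, χm, AdjoinRoot.lift_of]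
  rfl

lemma dvd_sub (z : HeckeS2) : (T 1 + 1 : R) ∣ χp z - χm z := by
  induction z using AdjoinRoot.induction_on with
  | ih p =>
    rw [χp, χm, AdjoinRoot.lift_mk, AdjoinRoot.lift_mk, eval₂_eq_eval_map,
      eval₂_eq_eval_map, Polynomial.map_id]
    simpa [sub_neg_eq_add] using sub_dvd_eval_sub (T 1) (-1) p

/-- evaluation `q ↦ 2` into `ℚ` -/
noncomputable def ε : R →+* ℚ :=
  ((AddMonoidAlgebra.lift ℤ ℚ ℤ
    ((Units.coeHom ℚ).comp (zpowersHom ℚˣ (Units.mk0 2 two_ne_zero)))).toRingHom)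

lemma ε_single (n : ℤ) (r : ℤ) : ε (AddMonoidAlgebra.single n r) = r * 2 ^ n := by
  have h := AddMonoidAlgebra.lift_single
    ((Units.coeHom ℚ).comp (zpowersHom ℚˣ (Units.mk0 2 two_ne_zero))) n r
  have : ε (AddMonoidAlgebra.single n r) =
      r • ((Units.coeHom ℚ).comp (zpowersHom ℚˣ (Units.mk0 2 two_ne_zero)))
        (Multiplicative.ofAdd n) := h
  rw [this]
  simp [zpowersHom_apply, Units.coeHom_apply, zsmul_eq_mul]

lemma ε_T (n : ℤ) : ε (T n) = 2 ^ n := by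
  simpa using ε_single n 1

lemma ε_C (r : ℤ) : ε (LaurentPolynomial.C r) = r := by
  simpa [LaurentPolynomial.single_eq_C] using ε_single 0 r

lemma ε_toLaurent (p : Polynomial ℤ) : ε (toLaurent p) = ((p.eval 2 : ℤ) : ℚ) := by
  induction p using Polynomial.induction_on' with
  | add p q hp hq => rw [map_add, map_add, hp, hq, eval_add]; push_cast; ring
  | monomial n a =>
    rw [Polynomial.toLaurent_C_mul_T, map_mul, ε_C, ε_T, eval_monomial, zpow_natCast]
    push_cast
    ring

lemma dyadic (u : R) : ∃ (n : ℕ) (m : ℤ), ε u * 2 ^ n = (m : ℚ) := by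
  obtain ⟨n, p, hp⟩ := LaurentPolynomial.exists_T_pow u
  refine ⟨n, p.eval 2, ?_⟩
  have h := congrArg ε hp
  rw [ε_toLaurent, map_mul, ε_T, zpow_natCast] at h
  exact h.symm

lemma rat_pow_eq (x : ℚ) {m n : ℕ} (hmn : m < n) (h : x ^ m = x ^ n) :
    x = 0 ∨ x = 1 ∨ x = -1 := by
  by_cases hx : x = 0
  · exact Or.inl hx
  · have hxm : x ^ m ≠ 0 := pow_ne_zero _ hx
    have h2 : x ^ m * x ^ (n - m) = x ^ m * 1 := by
      rw [mul_one, ← pow_add, h]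
      congr 1
      omega
    have h1 : x ^ (n - m) = 1 := mul_left_cancel₀ hxm h2
    rcases (pow_eq_one_iff_of_ne_zero (by omega : n - m ≠ 0)).mp h1 with h | h
    · exact Or.inr (Or.inl h)
    · exact Or.inr (Or.inr h.1)

lemma int_aux {d m : ℤ} {n : ℕ} (hd2 : -2 ≤ d) (hd2' : d ≤ 2)
    (h : d * 2 ^ n = 3 * m) : d = 0 := by
  have h3 : Prime (3 : ℤ) := by norm_num
  have hdvd : (3 : ℤ) ∣ d * 2 ^ n := ⟨m, h⟩
  rcases h3.dvd_mul.mp hdvd with h' | h'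
  · omega
  · have := h3.dvd_of_dvd_pow h'
    norm_num at this

lemma qcase {x y : ℚ} (hx : x = 0 ∨ x = 1 ∨ x = -1) (hy : y = 0 ∨ y = 1 ∨ y = -1)
    {n : ℕ} {m : ℤ} (h : (x - y) * 2 ^ n = 3 * (m : ℚ)) : x = y := by
  obtain ⟨d, hd1, hd2, hd3⟩ : ∃ d : ℤ, (d : ℚ) = x - y ∧ -2 ≤ d ∧ d ≤ 2 := by
    rcases hx with rfl | rfl | rfl <;> rcases hy with rfl | rfl | rfl
    · exact ⟨0, by norm_num, by norm_num, by norm_num⟩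
    · exact ⟨-1, by norm_num, by norm_num, by norm_num⟩
    · exact ⟨1, by norm_num, by norm_num, by norm_num⟩
    · exact ⟨1, by norm_num, by norm_num, by norm_num⟩
    · exact ⟨0, by norm_num, by norm_num, by norm_num⟩
    · exact ⟨2, by norm_num, by norm_num, by norm_num⟩
    · exact ⟨-1, by norm_num, by norm_num, by norm_num⟩
    · exact ⟨-2, by norm_num, by norm_num, by norm_num⟩
    · exact ⟨0, by norm_num, by norm_num, by norm_num⟩
  have h' : (d : ℚ) * 2 ^ n = ((3 * m : ℤ) : ℚ) := by rw [hd1, h]; push_cast; ring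
  have hz : d * 2 ^ n = 3 * m := by exact_mod_cast h'
  have hd0 : d = 0 := int_aux hd2 hd3 hz
  have hxy : x - y = 0 := by rw [← hd1, hd0]; norm_num
  linarith

noncomputable def Ψp : HeckeS2 →+* ℚ := ε.comp χp
noncomputable def Ψm : HeckeS2 →+* ℚ := ε.comp χm

lemma Ψp_apply (z : HeckeS2) : Ψp z = ε (χp z) := rfl
lemma Ψm_apply (z : HeckeS2) : Ψm z = ε (χm z) := rfl

end NMB

open NMB

/-- There is no multiplicative `R`-basis of the Iwahori–Hecke algebra `𝓗₂` of
`S₂` over `R = ℤ[q,q⁻¹]` (which is commutative, hence equal to its centre). -/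
theorem no_multiplicative_basis_heckeS2 :
    ¬ ∃ (ι : Type) (b : Module.Basis ι (LaurentPolynomial ℤ) HeckeS2),
      ∀ i j : ι, ∃ k : ι, b i * b j = b k := by
  rintro ⟨ι, b, hb⟩
  haveI : Module.Finite R HeckeS2 :=
    Module.Finite.of_basis (AdjoinRoot.powerBasis' hmonic).basis
  haveI : Finite ι := Module.Finite.finite_basis b
  -- powers of a basis vector repeat
  have hpow : ∀ i : ι, ∃ m n : ℕ, m < n ∧ b i ^ m = b i ^ n := by
    intro i
    choose g hg using hb i
    set u : ℕ → ι := fun n => g^[n] i with hu_def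
    have hu : ∀ n, b i ^ (n + 1) = b (u n) := by
      intro n
      induction n with
      | zero => simp [hu_def]
      | succ n ih =>
        calc b i ^ (n + 1 + 1) = b i * b i ^ (n + 1) := by rw [pow_succ']
        _ = b i * b (u n) := by rw [ih]
        _ = b (g (u n)) := hg _
        _ = b (u (n + 1)) := by rw [hu_def]; simp [Function.iterate_succ_apply']
    obtain ⟨a, c, hac, h⟩ := Finite.exists_ne_map_eq_of_infinite u
    rcases hac.lt_or_gt with hlt | hlt
    · exact ⟨a + 1, c + 1, by omega, by rw [hu, hu, h]⟩
    · exact ⟨c + 1, a + 1, by omega, by rw [hu, hu, h]⟩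
  have hvals : ∀ (ψ : HeckeS2 →+* ℚ) (i : ι),
      ψ (b i) = 0 ∨ ψ (b i) = 1 ∨ ψ (b i) = -1 := by
    intro ψ i
    obtain ⟨m, n, h1, h3⟩ := hpow i
    refine rat_pow_eq _ h1 ?_
    rw [← map_pow ψ (b i) m, ← map_pow ψ (b i) n, h3]
  have key : ∀ i, Ψp (b i) = Ψm (b i) := by
    intro i
    obtain ⟨c, hc⟩ := dvd_sub (b i)
    obtain ⟨n, m, hnm⟩ := dyadic c
    have h3 : Ψp (b i) - Ψm (b i) = 3 * ε c := by
      calc Ψp (b i) - Ψm (b i) = ε (χp (b i) - χm (b i)) := by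
            rw [Ψp_apply, Ψm_apply]
            exact (map_sub ε _ _).symm
      _ = ε (T 1 + 1) * ε c := by rw [hc, map_mul]
      _ = 3 * ε c := by rw [map_add, map_one, ε_T]; norm_num
    have h4 : (Ψp (b i) - Ψm (b i)) * 2 ^ n = 3 * (m : ℚ) := by
      rw [h3, mul_assoc, hnm]
    exact qcase (hvals Ψp i) (hvals Ψm i) h4
  -- the two characters agree everywhere, contradiction at the root
  have hroot : Ψp (AdjoinRoot.root f) = Ψm (AdjoinRoot.root f) := by
    have hz := b.linearCombination_repr (AdjoinRoot.root f)
    rw [← hz, Finsupp.linearCombination_apply, Finsupp.sum, map_sum, map_sum]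
    apply Finset.sum_congr rfl
    intro i _
    rw [Ψp_apply, Ψm_apply, χp_smul, χm_smul, map_mul, map_mul]
    rw [← Ψp_apply, ← Ψm_apply, key i]
  rw [Ψp_apply, Ψm_apply, χp_root, χm_root, ε_T, map_neg, map_one] at hroot
  norm_num at hroot
end

section
/- Let B be a multiplicative ℤ-basis of the centre Z(ℤSₙ) of the integral group algebra of Sₙ. Then every element b ∈ B satisfies b³ = b. -/
section Aux

lemma real_pow_three_eq (t : ℝ) (m p : ℕ) (hp : p ≠ 0) (h : t ^ m = t ^ (m + p)) :
    t ^ 3 = t := by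
  rcases eq_or_ne t 0 with rfl | ht
  · simp
  · have hm : t ^ m ≠ 0 := pow_ne_zero _ ht
    have hpow : t ^ p = 1 := by
      have h2 : t ^ m * t ^ p = t ^ m * 1 := by
        rw [mul_one, ← pow_add, ← h]
      exact mul_left_cancel₀ hm h2
    rcases pow_eq_one_iff_cases.mp hpow with h | h | h
    · exact absurd h hp
    · rw [h]; ring
    · rw [h.1]; ring

lemma herm_pow_three_eq {N : Type} [Fintype N] [DecidableEq N] {M : Matrix N N ℝ}
    (hM : M.IsHermitian) (m p : ℕ) (hp : p ≠ 0) (h : M ^ m = M ^ (m + p)) :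
    M ^ 3 = M := by
  set U : Matrix N N ℝ := (hM.eigenvectorUnitary : Matrix N N ℝ) with hU
  set d : N → ℝ := RCLike.ofReal ∘ hM.eigenvalues with hd
  have hUU : U * star U = 1 := Matrix.mem_unitaryGroup_iff.mp hM.eigenvectorUnitary.2
  have hUU' : star U * U = 1 := Matrix.mem_unitaryGroup_iff'.mp hM.eigenvectorUnitary.2
  have hspec : M = U * Matrix.diagonal d * star U := hM.spectral_theorem
  have hpow : ∀ k : ℕ, M ^ k = U * Matrix.diagonal (d ^ k) * star U := by
    intro k
    induction k with
    | zero =>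
        have h1 : Matrix.diagonal (1 : N → ℝ) = 1 := Matrix.diagonal_one
        rw [pow_zero, pow_zero, h1, Matrix.mul_one, hUU]
    | succ k ih =>
        have h1 : Matrix.diagonal (d ^ k) * Matrix.diagonal d = Matrix.diagonal (d ^ (k + 1)) := by
          rw [Matrix.diagonal_mul_diagonal]
          rfl
        rw [pow_succ, ih, hspec]
        calc U * Matrix.diagonal (d ^ k) * star U * (U * Matrix.diagonal d * star U)
            = U * Matrix.diagonal (d ^ k) * (star U * U) * Matrix.diagonal d * star U := by
              noncomm_ring
          _ = U * (Matrix.diagonal (d ^ k) * Matrix.diagonal d) * star U := by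
              rw [hUU']; noncomm_ring
          _ = U * Matrix.diagonal (d ^ (k + 1)) * star U := by rw [h1]
  have hdiag : Matrix.diagonal (d ^ m) = Matrix.diagonal (d ^ (m + p)) := by
    have h2 := h
    rw [hpow m, hpow (m + p)] at h2
    have h3 := congrArg (fun X => star U * X * U) h2
    simp only [← Matrix.mul_assoc, hUU', Matrix.one_mul] at h3
    simp only [Matrix.mul_assoc, hUU', Matrix.mul_one] at h3
    exact h3
  have hd3 : d ^ 3 = d := by
    have h4 : d ^ m = d ^ (m + p) := Matrix.diagonal_injective hdiag
    funext g
    have h5 := congrFun h4 g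
    simp only [Pi.pow_apply] at h5 ⊢
    exact real_pow_three_eq (d g) m p hp h5
  rw [hpow 3, hd3, ← hspec]

variable (G : Type) [Group G] [Fintype G] [DecidableEq G]

/-- The permutation-matrix monoid hom for the left regular representation. -/
def permMat : G →* Matrix G G ℝ where
  toFun a := Matrix.of fun k h => if k = a * h then 1 else 0
  map_one' := by
    ext k h
    simp [Matrix.one_apply]
  map_mul' a c := by
    ext k h
    simp only [Matrix.of_apply, Matrix.mul_apply, boole_mul]
    rw [Finset.sum_eq_single (c * h)]
    · simp [mul_assoc]
    · intro j _ hj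
      simp [hj]
    · intro hmem
      exact absurd (Finset.mem_univ _) hmem

/-- The left regular representation of `ℤG` by real matrices. -/
noncomputable def regRep : MonoidAlgebra ℤ G →+* Matrix G G ℝ :=
  MonoidAlgebra.liftNCRingHom ((Matrix.scalar G).comp (Int.castRingHom ℝ)) (permMat G)
    (fun c x => Matrix.scalar_commute _ (fun r' => Commute.all _ r') _)

lemma regRep_apply (x : MonoidAlgebra ℤ G) (k h : G) :
    regRep G x k h = ((x.coeff (k * h⁻¹) : ℤ) : ℝ) := by
  induction x using MonoidAlgebra.induction_linear with
  | zero => simp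
  | add f g hf hg => simp [map_add, Matrix.add_apply, hf, hg, MonoidAlgebra.coeff_add]
  | single a c =>
      have h1 : regRep G (MonoidAlgebra.single a c)
          = (Matrix.scalar G ((c : ℤ) : ℝ)) * permMat G a :=
        MonoidAlgebra.liftNC_single _ _ _ _
      rw [h1, Matrix.scalar_apply, Matrix.diagonal_mul]
      show ((c : ℤ) : ℝ) * (if k = a * h then 1 else 0) = _
      rw [MonoidAlgebra.coeff_single, Finsupp.single_apply]
      by_cases hk : k = a * h
      · have : a = k * h⁻¹ := by rw [hk]; group
        simp [hk, ← this]
      · have : ¬ (a = k * h⁻¹) := fun ha => hk (by rw [ha]; group)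
        simp [hk, this]

lemma regRep_injective : Function.Injective (regRep G) := by
  intro x y hxy
  ext g
  have h2 : regRep G x g 1 = regRep G y g 1 := by rw [hxy]
  rw [regRep_apply, regRep_apply] at h2
  simp only [inv_one, mul_one] at h2
  exact Int.cast_injective (α := ℝ) h2

end Aux

/-- Every element `b` of a multiplicative `ℤ`-basis of the centre of the
integral group algebra `ℤSₙ` satisfies `b ^ 3 = b`. -/
theorem cube_self_of_mem_multiplicative_basis (n : ℕ) {ι : Type}
    (b : Module.Basis ι ℤ (Subalgebra.center ℤ (MonoidAlgebra ℤ (Equiv.Perm (Fin n)))))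
    (hmult : ∀ i j : ι, ∃ k : ι, b i * b j = b k) (i : ι) :
    (b i) ^ 3 = b i := by
  classical
  -- the index type is finite
  haveI : Module.Finite ℤ (MonoidAlgebra ℤ (Equiv.Perm (Fin n))) :=
    Module.Finite.equiv ((MonoidAlgebra.coeffLinearEquiv ℤ).trans (Finsupp.linearEquivFunOnFinite ℤ ℤ (Equiv.Perm (Fin n)))).symm
  haveI : IsNoetherian ℤ (MonoidAlgebra ℤ (Equiv.Perm (Fin n))) :=
    isNoetherian_of_isNoetherianRing_of_finite ℤ _
  haveI : Module.Finite ℤ (Subalgebra.center ℤ (MonoidAlgebra ℤ (Equiv.Perm (Fin n)))) :=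
    Module.Finite.iff_fg.mpr (IsNoetherian.noetherian
      (Subalgebra.toSubmodule (Subalgebra.center ℤ (MonoidAlgebra ℤ (Equiv.Perm (Fin n))))))
  haveI : Finite ι := Module.Finite.finite_basis b
  -- powers of `b i` hit basis elements, so they repeat
  let s : ℕ → ι := fun k => Nat.rec i (fun _ prev => Classical.choose (hmult i prev)) k
  have hs : ∀ k : ℕ, b i ^ (k + 1) = b (s k) := by
    intro k
    induction k with
    | zero => rw [pow_one]; rfl
    | succ k ih =>
        have hc := Classical.choose_spec (hmult i (s k))
        calc b i ^ (k + 2) = b i * b i ^ (k + 1) := by rw [← pow_succ']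
          _ = b i * b (s k) := by rw [ih]
          _ = b (s (k + 1)) := hc
  obtain ⟨k, l, hkl, hsk⟩ := Finite.exists_ne_map_eq_of_infinite s
  -- wlog k < l
  obtain ⟨m, p, hp, hbm⟩ : ∃ m p : ℕ, p ≠ 0 ∧ b i ^ m = b i ^ (m + p) := by
    rcases lt_or_gt_of_ne hkl with h | h
    · exact ⟨k + 1, l - k, by omega, by
        rw [hs k, hsk, ← hs l]; congr 1; omega⟩
    · exact ⟨l + 1, k - l, by omega, by
        rw [hs l, ← hsk, ← hs k]; congr 1; omega⟩
  -- pass to the group algebra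
  set x : MonoidAlgebra ℤ (Equiv.Perm (Fin n)) := (b i : MonoidAlgebra ℤ (Equiv.Perm (Fin n))) with hx
  have hxm : x ^ m = x ^ (m + p) := by
    have := congrArg
      (Subtype.val : Subalgebra.center ℤ (MonoidAlgebra ℤ (Equiv.Perm (Fin n))) →
        MonoidAlgebra ℤ (Equiv.Perm (Fin n))) hbm
    simpa using this
  -- x is a class function
  have hcent : ∀ a : MonoidAlgebra ℤ (Equiv.Perm (Fin n)), a * x = x * a := Subalgebra.mem_center_iff.mp (b i).2
  have hclass : ∀ σ g : Equiv.Perm (Fin n), x.coeff (σ * g * σ⁻¹) = x.coeff g := by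
    intro σ g
    have h1 := hcent (MonoidAlgebra.single σ 1)
    have h2 : ((MonoidAlgebra.single σ 1 * x : MonoidAlgebra ℤ (Equiv.Perm (Fin n)))).coeff (σ * g)
        = ((x * MonoidAlgebra.single σ 1 : MonoidAlgebra ℤ (Equiv.Perm (Fin n)))).coeff (σ * g) := by
      rw [h1]
    rw [MonoidAlgebra.single_mul_apply, MonoidAlgebra.mul_single_apply] at h2
    simpa using h2.symm
  have hinv : ∀ g : Equiv.Perm (Fin n), x.coeff g⁻¹ = x.coeff g := by
    intro g
    have hconj : IsConj g g⁻¹ :=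
      Equiv.Perm.isConj_iff_cycleType_eq.mpr (Equiv.Perm.cycleType_inv g).symm
    obtain ⟨c, hc⟩ := isConj_iff.mp hconj
    rw [← hc, hclass]
  -- the regular representation matrix is symmetric
  set M := regRep (Equiv.Perm (Fin n)) x with hM
  have hherm : M.IsHermitian := by
    show M.conjTranspose = M
    ext g h
    rw [Matrix.conjTranspose_apply, hM, regRep_apply, regRep_apply]
    have : (h * g⁻¹)⁻¹ = g * h⁻¹ := by group
    rw [← this, hinv]
    simp
  have hMm : M ^ m = M ^ (m + p) := by
    rw [hM, ← map_pow, ← map_pow, hxm]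
  have hM3 : M ^ 3 = M := herm_pow_three_eq hherm m p hp hMm
  have hx3 : x ^ 3 = x := by
    apply regRep_injective (Equiv.Perm (Fin n))
    rw [map_pow, ← hM, hM3]
  ext1
  simpa using hx3
end
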